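/- For any matrix B ∈ ℝ^{d×d}, vectors x₁, x₂, y₁, y₂ ∈ ℝ^d, and scalars w_{11}, w_{12}, w_{21}, w_{22}, the determinant identity holds: det([[B, y₁, y₂],[x₁^T, w₁₁, w₁₂],[x₂^T, w₂₁, w₂₂]]) · det(B) = det([[B, y₁],[x₁^T, w₁₁]]) · det([[B, y₂],[x₂^T, w₂₂]]) − det([[B, y₂],[x₁^T, w₁₂]]) · det([[B, y₁],[x₂^T, w₂₁]]). -/

import Mathlib

open Matrix BigOperators

/-- The `(d+1)×(d+1)` block matrix `[[B, y],[xᵀ, w]]`. -/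
noncomputable def blk1 {d : ℕ} (B : Matrix (Fin d) (Fin d) ℝ) (x y : Fin d → ℝ) (w : ℝ) :
    Matrix (Fin d ⊕ Fin 1) (Fin d ⊕ Fin 1) ℝ :=
  Matrix.fromBlocks B (Matrix.of fun i (_ : Fin 1) => y i)
    (Matrix.of fun (_ : Fin 1) j => x j) (Matrix.of fun (_ : Fin 1) (_ : Fin 1) => w)

/-- The `(d+2)×(d+2)` block matrix `[[B, y₁, y₂],[x₁ᵀ, w₁₁, w₁₂],[x₂ᵀ, w₂₁, w₂₂]]`. -/
noncomputable def blk2 {d : ℕ} (B : Matrix (Fin d) (Fin d) ℝ) (x₁ x₂ y₁ y₂ : Fin d → ℝ)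
    (w₁₁ w₁₂ w₂₁ w₂₂ : ℝ) : Matrix (Fin d ⊕ Fin 2) (Fin d ⊕ Fin 2) ℝ :=
  Matrix.fromBlocks B
    (Matrix.of fun i j => if j = (0 : Fin 2) then y₁ i else y₂ i)
    (Matrix.of fun i j => if i = (0 : Fin 2) then x₁ j else x₂ j)
    !![w₁₁, w₁₂; w₂₁, w₂₂]

lemma key {d : ℕ} (B : Matrix (Fin d) (Fin d) ℝ) (hB : IsUnit B.det)
    (x₁ x₂ y₁ y₂ : Fin d → ℝ) (w₁₁ w₁₂ w₂₁ w₂₂ : ℝ) :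
    (blk2 B x₁ x₂ y₁ y₂ w₁₁ w₁₂ w₂₁ w₂₂).det * B.det =
      (blk1 B x₁ y₁ w₁₁).det * (blk1 B x₂ y₂ w₂₂).det -
        (blk1 B x₁ y₂ w₁₂).det * (blk1 B x₂ y₁ w₂₁).det := by
  have : Invertible B := B.invertibleOfIsUnitDet hB
  set a : (Fin d → ℝ) → (Fin d → ℝ) → ℝ := fun p q => ∑ k, (∑ l, p l * (⅟B) l k) * q k with ha
  have h1 : ∀ x y w, (blk1 B x y w).det = B.det * (w - a x y) := by
    intro x y w
    rw [blk1, det_fromBlocks₁₁]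
    congr 1
    rw [Matrix.det_fin_one]
    simp [Matrix.mul_apply, ha, mul_comm]
  have h2 : (blk2 B x₁ x₂ y₁ y₂ w₁₁ w₁₂ w₂₁ w₂₂).det =
      B.det * ((w₁₁ - a x₁ y₁) * (w₂₂ - a x₂ y₂) - (w₁₂ - a x₁ y₂) * (w₂₁ - a x₂ y₁)) := by
    rw [blk2, det_fromBlocks₁₁]
    congr 1
    rw [Matrix.det_fin_two]
    simp [Matrix.mul_apply, ha]
  rw [h1, h1, h1, h1, h2]
  ring

lemma eval_det' (B : Matrix (Fin d) (Fin d) ℝ) (t : ℝ) :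
    (B + t • 1).det = Polynomial.eval t (Matrix.charpoly (-B)) := by
  rw [Matrix.charpoly, ← Polynomial.coe_evalRingHom, RingHom.map_det]
  congr 1
  ext i j
  rcases eq_or_ne i j with h | h
  · subst h; simp [Matrix.charmatrix_apply_eq, mul_comm]; ring
  · simp [Matrix.charmatrix_apply_ne _ _ _ h, Matrix.one_apply_ne h]

lemma dense_unit (B : Matrix (Fin d) (Fin d) ℝ) :
    Dense {t : ℝ | IsUnit (B + t • 1).det} := by
  have hfin : Set.Finite {t : ℝ | ¬ IsUnit (B + t • 1).det} := by
    apply Set.Finite.subset (Polynomial.finite_setOf_isRoot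
      (p := Matrix.charpoly (-B)) (Matrix.charpoly_monic _).ne_zero)
    intro t ht
    simp only [Set.mem_setOf_eq, isUnit_iff_ne_zero, not_not] at ht
    simpa [Polynomial.IsRoot, ← eval_det'] using ht
  have := hfin.countable.dense_compl ℝ
  simpa [Set.compl_setOf] using this

lemma cont_line {d : ℕ} (B : Matrix (Fin d) (Fin d) ℝ) :
    Continuous fun t : ℝ => B + t • (1 : Matrix (Fin d) (Fin d) ℝ) := by
  fun_prop

lemma cont_blk1 {d : ℕ} (x y : Fin d → ℝ) (w : ℝ) :
    Continuous fun M : Matrix (Fin d) (Fin d) ℝ => (blk1 M x y w).det := by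
  apply Continuous.matrix_det
  apply continuous_matrix
  rintro (i | i) (j | j) <;> simp only [blk1, Matrix.fromBlocks_apply₁₁,
    Matrix.fromBlocks_apply₁₂, Matrix.fromBlocks_apply₂₁, Matrix.fromBlocks_apply₂₂] <;>
    first
    | exact (continuous_apply j).comp (continuous_apply i)
    | exact continuous_const

lemma cont_blk2 {d : ℕ} (x₁ x₂ y₁ y₂ : Fin d → ℝ) (w₁₁ w₁₂ w₂₁ w₂₂ : ℝ) :
    Continuous fun M : Matrix (Fin d) (Fin d) ℝ =>
      (blk2 M x₁ x₂ y₁ y₂ w₁₁ w₁₂ w₂₁ w₂₂).det := by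
  apply Continuous.matrix_det
  apply continuous_matrix
  rintro (i | i) (j | j) <;> simp only [blk2, Matrix.fromBlocks_apply₁₁,
    Matrix.fromBlocks_apply₁₂, Matrix.fromBlocks_apply₂₁, Matrix.fromBlocks_apply₂₂] <;>
    first
    | exact (continuous_apply j).comp (continuous_apply i)
    | exact continuous_const

/-- Desnanot–Jacobi / Dodgson condensation style determinant identity. -/
theorem stmt6 {d : ℕ} (B : Matrix (Fin d) (Fin d) ℝ) (x₁ x₂ y₁ y₂ : Fin d → ℝ)
    (w₁₁ w₁₂ w₂₁ w₂₂ : ℝ) :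
    (blk2 B x₁ x₂ y₁ y₂ w₁₁ w₁₂ w₂₁ w₂₂).det * B.det =
      (blk1 B x₁ y₁ w₁₁).det * (blk1 B x₂ y₂ w₂₂).det -
        (blk1 B x₁ y₂ w₁₂).det * (blk1 B x₂ y₁ w₂₁).det := by
  have hfg : (fun t : ℝ => (blk2 (B + t • 1) x₁ x₂ y₁ y₂ w₁₁ w₁₂ w₂₁ w₂₂).det * (B + t • 1).det)
      = fun t : ℝ => (blk1 (B + t • 1) x₁ y₁ w₁₁).det * (blk1 (B + t • 1) x₂ y₂ w₂₂).det -
        (blk1 (B + t • 1) x₁ y₂ w₁₂).det * (blk1 (B + t • 1) x₂ y₁ w₂₁).det := by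
    apply Continuous.ext_on (dense_unit B)
    · exact ((cont_blk2 _ _ _ _ _ _ _ _).comp (cont_line B)).mul
        (Continuous.matrix_det (cont_line B))
    · exact (((cont_blk1 x₁ y₁ w₁₁).comp (cont_line B)).mul
        ((cont_blk1 x₂ y₂ w₂₂).comp (cont_line B))).sub
        (((cont_blk1 x₁ y₂ w₁₂).comp (cont_line B)).mul
        ((cont_blk1 x₂ y₁ w₂₁).comp (cont_line B)))
    · intro t ht
      exact key _ ht _ _ _ _ _ _ _ _
  have h0 := congrFun hfg 0
  simpa using h0
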